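/- Let V be a finite-dimensional vector space with a subspace C ⊂ V (the contact hyperplane-distribution fiber) and alternating forms ω¹,…,ωᵏ on V. Call a subspace E ⊂ C isotropic if ωᵅ(e,e') = 0 for all e,e' ∈ E and all α, and define the orthogonal E^⊥ = {v ∈ C : ωᵅ(v,e) = 0 for all e ∈ E, all α}. Suppose L ⊂ C is isotropic and admits a complement W ⊂ C with L ⊕ W = C and W isotropic. Then there is no isotropic subspace L' with L ⊊ L' ⊂ C; i.e., L is maximal among isotropic subspaces. -/
import Mathlib


/-- Maximality of Legendrian subspaces: if `L ⊂ C` is isotropic and admits an isotropic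
complement `W` in `C` (with the forms `ωᵅ` jointly nondegenerate on `C`, coming from the
k-contact condition), then there is no strictly larger isotropic subspace `L' ⊂ C`. -/
theorem stmt9 {k : ℕ} {V : Type*} [AddCommGroup V] [Module ℝ V] [FiniteDimensional ℝ V]
    (C : Submodule ℝ V) (ω : Fin k → V →ₗ[ℝ] V →ₗ[ℝ] ℝ)
    (halt : ∀ α v, ω α v v = 0)
    (hnd : ∀ v ∈ C, (∀ α, ∀ w ∈ C, ω α v w = 0) → v = 0)
    (L W : Submodule ℝ V) (hLC : L ≤ C) (hWC : W ≤ C)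
    (hLW₁ : L ⊓ W = ⊥) (hLW₂ : L ⊔ W = C)
    (hLiso : ∀ v ∈ L, ∀ w ∈ L, ∀ α, ω α v w = 0)
    (hWiso : ∀ v ∈ W, ∀ w ∈ W, ∀ α, ω α v w = 0) :
    ¬ ∃ L' : Submodule ℝ V, L < L' ∧ L' ≤ C ∧ ∀ v ∈ L', ∀ w ∈ L', ∀ α, ω α v w = 0 := by
  rintro ⟨L', hLL', hL'C, hL'iso⟩
  obtain ⟨x, hxL', hxL⟩ := SetLike.exists_of_lt hLL'
  have hxC : x ∈ C := hL'C hxL'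
  rw [← hLW₂, Submodule.mem_sup] at hxC
  obtain ⟨l, hl, w, hw, hx⟩ := hxC
  have hwne : w ≠ 0 := by
    rintro rfl
    rw [add_zero] at hx; exact hxL (hx ▸ hl)
  apply hwne
  apply hnd w (hWC hw)
  intro α c hc
  rw [← hLW₂, Submodule.mem_sup] at hc
  obtain ⟨l', hl', w', hw', rfl⟩ := hc
  have h1 : ω α w l' = 0 := by
    have hw' : w = x - l := by rw [← hx]; abel
    rw [hw', map_sub, LinearMap.sub_apply,
      hL'iso x hxL' l' (hLL'.le hl') α, hLiso l hl l' hl' α, sub_zero]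
  rw [map_add, h1, hWiso w hw w' hw' α, zero_add]
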